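/- The number of (2,1,2)-subnetworks of a reduced decomposition of w ∈ S_n is invariant under short braid moves: any two reduced decompositions of w in the same commutation class induce the same number of triples a < b < c whose induced reduced word is (2,1,2). -/

import Mathlib

/-- The adjacent transposition `s_i` of `S_n` (1-based: swaps positions `i` and `i+1`). -/
def adjT (n : ℕ) (i : ℕ) : Equiv.Perm (Fin n) :=
  if h : 1 ≤ i ∧ i < n then Equiv.swap ⟨i - 1, by omega⟩ ⟨i, h.2⟩ else 1

/-- The number of inversions of a permutation of `Fin n`. -/
def invCount (n : ℕ) (w : Equiv.Perm (Fin n)) : ℕ :=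
  (Finset.univ.filter fun p : Fin n × Fin n => p.1 < p.2 ∧ w p.2 < w p.1).card

/-- `ρ` is a reduced decomposition of `w`: a word of length `inv(w)` in the letters
`1, …, n-1` whose product of adjacent transpositions is `w`. -/
def IsReducedDecomp (n : ℕ) (w : Equiv.Perm (Fin n)) (ρ : List ℕ) : Prop :=
  (∀ r ∈ ρ, 1 ≤ r ∧ r < n) ∧ (ρ.map (adjT n)).prod = w ∧ ρ.length = invCount n w

/-- A short braid move: swapping two adjacent letters differing by at least 2. -/
def ShortBraidMove (ρ ρ' : List ℕ) : Prop :=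
  ∃ l r : List ℕ, ∃ a b : ℕ, (a + 2 ≤ b ∨ b + 2 ≤ a) ∧
    ρ = l ++ [a, b] ++ r ∧ ρ' = l ++ [b, a] ++ r

/-- Two words are in the same commutation class iff related by short braid moves. -/
def CommEquiv : List ℕ → List ℕ → Prop := Relation.ReflTransGen ShortBraidMove

/-- A long braid move: `(i+1, i, i+1) ↔ (i, i+1, i)` on a consecutive substring. -/
def LongBraidMove (ρ ρ' : List ℕ) : Prop :=
  ∃ l r : List ℕ, ∃ i : ℕ,
    (ρ = l ++ [i + 1, i, i + 1] ++ r ∧ ρ' = l ++ [i, i + 1, i] ++ r) ∨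
    (ρ = l ++ [i, i + 1, i] ++ r ∧ ρ' = l ++ [i + 1, i, i + 1] ++ r)

/-- The number of commutation classes of reduced decompositions of `w`. -/
noncomputable def numCommClasses (n : ℕ) (w : Equiv.Perm (Fin n)) : ℕ :=
  Nat.card (Quot fun a b : {ρ : List ℕ // IsReducedDecomp n w ρ} => CommEquiv a.1 b.1)

/-- The arrangement (position ↦ value) after the first `k` steps of the word `ρ`. -/
def prefixPerm (n : ℕ) (ρ : List ℕ) (k : ℕ) : Equiv.Perm (Fin n) :=
  ((ρ.take k).map (adjT n)).prod

/-- The word induced by `ρ` on a set `A` of values: record, in order, each step of `ρ`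
swapping two values of `A`, labeled (1-based) by the relative position of the swapped
pair among the values of `A`. -/
def inducedWord (n : ℕ) (ρ : List ℕ) (A : Finset (Fin n)) : List ℕ :=
  (List.range ρ.length).filterMap fun k =>
    let u := prefixPerm n ρ k
    let i := ρ.getD k 0
    if h : 1 ≤ i ∧ i < n then
      if u ⟨i - 1, by omega⟩ ∈ A ∧ u ⟨i, h.2⟩ ∈ A then
        some ((A.filter fun x => (u.symm x : ℕ) < i - 1).card + 1)
      else none
    else none

/-- The number of `(2,1,2)`-subnetworks of `ρ`. -/
def count212 (n : ℕ) (ρ : List ℕ) : ℕ :=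
  (Finset.univ.filter fun A : Finset (Fin n) =>
    A.card = 3 ∧ inducedWord n ρ A = [2, 1, 2]).card

/-- The number of 321-patterns of `w`. -/
def N321 (n : ℕ) (w : Equiv.Perm (Fin n)) : ℕ :=
  (Finset.univ.filter fun t : Fin n × Fin n × Fin n =>
    t.1 < t.2.1 ∧ t.2.1 < t.2.2 ∧ w t.2.2 < w t.2.1 ∧ w t.2.1 < w t.1).card

namespace Count212Aux

/-- The optional letter contributed by one step of the wiring diagram. -/
def stepOpt (n : ℕ) (u : Equiv.Perm (Fin n)) (i : ℕ) (A : Finset (Fin n)) : Option ℕ :=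
  if h : 1 ≤ i ∧ i < n then
    if u ⟨i - 1, by omega⟩ ∈ A ∧ u ⟨i, h.2⟩ ∈ A then
      some ((A.filter fun x => (u.symm x : ℕ) < i - 1).card + 1)
    else none
  else none

/-- Recursive form of the induced word, with accumulated prefix permutation `u`. -/
def goWord (n : ℕ) (u : Equiv.Perm (Fin n)) : List ℕ → Finset (Fin n) → List ℕ
  | [], _ => []
  | i :: t, A => (stepOpt n u i A).toList ++ goWord n (u * adjT n i) t A

lemma filterMap_cons_toList {α β : Type*} (f : α → Option β) (a : α) (l : List α) :
    List.filterMap f (a :: l) = (f a).toList ++ List.filterMap f l := by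
  cases h : f a <;> simp [List.filterMap_cons, h]

lemma prefixPerm_zero (n : ℕ) (ρ : List ℕ) : prefixPerm n ρ 0 = 1 := by
  simp [prefixPerm]

lemma prefixPerm_cons_succ (n : ℕ) (i : ℕ) (t : List ℕ) (k : ℕ) :
    prefixPerm n (i :: t) (k + 1) = adjT n i * prefixPerm n t k := by
  simp [prefixPerm, List.take_succ_cons]

lemma filterMap_eq_go (n : ℕ) (ρ : List ℕ) (A : Finset (Fin n)) (u : Equiv.Perm (Fin n)) :
    (List.range ρ.length).filterMap
      (fun k => stepOpt n (u * prefixPerm n ρ k) (ρ.getD k 0) A) = goWord n u ρ A := by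
  induction ρ generalizing u with
  | nil => simp [goWord]
  | cons i t ih =>
    rw [List.length_cons, List.range_succ_eq_map, filterMap_cons_toList, List.filterMap_map]
    have h0 : stepOpt n (u * prefixPerm n (i :: t) 0) ((i :: t).getD 0 0) A
        = stepOpt n u i A := by
      simp [prefixPerm_zero]
    have h1 : ((fun k => stepOpt n (u * prefixPerm n (i :: t) k) ((i :: t).getD k 0) A) ∘ Nat.succ)
        = fun k => stepOpt n ((u * adjT n i) * prefixPerm n t k) (t.getD k 0) A := by
      funext k
      simp [Function.comp, prefixPerm_cons_succ, mul_assoc]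
    rw [h0, h1, ih (u * adjT n i)]
    simp [goWord]

lemma inducedWord_eq_go (n : ℕ) (ρ : List ℕ) (A : Finset (Fin n)) :
    inducedWord n ρ A = goWord n 1 ρ A := by
  have h := filterMap_eq_go n ρ A 1
  simp only [one_mul] at h
  rw [← h]
  rfl

lemma goWord_append (n : ℕ) (u : Equiv.Perm (Fin n)) (l m : List ℕ) (A : Finset (Fin n)) :
    goWord n u (l ++ m) A
      = goWord n u l A ++ goWord n (u * (l.map (adjT n)).prod) m A := by
  induction l generalizing u with
  | nil => simp [goWord]
  | cons i t ih =>
    simp [goWord, ih (u * adjT n i), mul_assoc]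

lemma adjT_apply_of_ne (n a : ℕ) (p : Fin n) (h1 : (p : ℕ) ≠ a - 1) (h2 : (p : ℕ) ≠ a) :
    adjT n a p = p := by
  unfold adjT
  split
  · exact Equiv.swap_apply_of_ne_of_ne (fun he => h1 (congrArg Fin.val he))
      (fun he => h2 (congrArg Fin.val he))
  · rfl

lemma adjT_apply_mk (n a c : ℕ) (hc : c < n) (h1 : c ≠ a - 1) (h2 : c ≠ a) :
    adjT n a ⟨c, hc⟩ = ⟨c, hc⟩ :=
  adjT_apply_of_ne n a ⟨c, hc⟩ h1 h2

lemma adjT_val_lt_iff (n a b : ℕ) (hsep : a + 2 ≤ b ∨ b + 2 ≤ a) (p : Fin n) :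
    ((adjT n a p : ℕ) < b - 1) ↔ ((p : ℕ) < b - 1) := by
  unfold adjT
  split
  · rename_i h
    rcases eq_or_ne p ⟨a - 1, by omega⟩ with rfl | h1
    · rw [Equiv.swap_apply_left]
      show a < b - 1 ↔ a - 1 < b - 1
      omega
    · rcases eq_or_ne p ⟨a, h.2⟩ with rfl | h2
      · rw [Equiv.swap_apply_right]
        show a - 1 < b - 1 ↔ a < b - 1
        omega
      · rw [Equiv.swap_apply_of_ne_of_ne h1 h2]
  · simp

lemma adjT_symm (n a : ℕ) : (adjT n a).symm = adjT n a := by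
  unfold adjT
  split
  · exact Equiv.symm_swap _ _
  · rfl

lemma stepOpt_mul_adjT (n a b : ℕ) (hsep : a + 2 ≤ b ∨ b + 2 ≤ a)
    (u : Equiv.Perm (Fin n)) (A : Finset (Fin n)) :
    stepOpt n (u * adjT n a) b A = stepOpt n u b A := by
  unfold stepOpt
  by_cases hb : 1 ≤ b ∧ b < n
  · rw [dif_pos hb, dif_pos hb]
    have e1 : (u * adjT n a) ⟨b - 1, by omega⟩ = u ⟨b - 1, by omega⟩ := by
      rw [Equiv.Perm.mul_apply, adjT_apply_mk n a (b - 1) (by omega) (by omega) (by omega)]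
    have e2 : (u * adjT n a) ⟨b, hb.2⟩ = u ⟨b, hb.2⟩ := by
      rw [Equiv.Perm.mul_apply, adjT_apply_mk n a b (by omega) (by omega) (by omega)]
    have e3 : (A.filter fun x => (((u * adjT n a).symm x : ℕ) < b - 1))
        = A.filter fun x => ((u.symm x : ℕ) < b - 1) := by
      apply Finset.filter_congr
      intro x _
      have hx : (u * adjT n a).symm x = adjT n a (u.symm x) := by
        rw [← Equiv.Perm.inv_def, mul_inv_rev, Equiv.Perm.mul_apply, Equiv.Perm.inv_def,
          Equiv.Perm.inv_def, adjT_symm]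
      rw [hx]
      exact adjT_val_lt_iff n a b hsep (u.symm x)
    rw [e1, e2, e3]
  · rw [dif_neg hb, dif_neg hb]

lemma not_both (n a b : ℕ) (hsep : a + 2 ≤ b ∨ b + 2 ≤ a) (u : Equiv.Perm (Fin n))
    (A : Finset (Fin n)) (hA : A.card = 3) :
    stepOpt n u a A = none ∨ stepOpt n u b A = none := by
  by_contra hc
  push_neg at hc
  have ha : 1 ≤ a ∧ a < n := by
    by_contra h; exact hc.1 (by unfold stepOpt; rw [dif_neg h])
  have hb : 1 ≤ b ∧ b < n := by
    by_contra h; exact hc.2 (by unfold stepOpt; rw [dif_neg h])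
  have hma : u ⟨a - 1, by omega⟩ ∈ A ∧ u ⟨a, ha.2⟩ ∈ A := by
    by_contra h; exact hc.1 (by unfold stepOpt; rw [dif_pos ha, if_neg h])
  have hmb : u ⟨b - 1, by omega⟩ ∈ A ∧ u ⟨b, hb.2⟩ ∈ A := by
    by_contra h; exact hc.2 (by unfold stepOpt; rw [dif_pos hb, if_neg h])
  have hsub : ({u ⟨a - 1, by omega⟩, u ⟨a, ha.2⟩, u ⟨b - 1, by omega⟩, u ⟨b, hb.2⟩} :
      Finset (Fin n)) ⊆ A := by
    simp only [Finset.insert_subset_iff, Finset.singleton_subset_iff]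
    exact ⟨hma.1, hma.2, hmb.1, hmb.2⟩
  have hcard : ({u ⟨a - 1, by omega⟩, u ⟨a, ha.2⟩, u ⟨b - 1, by omega⟩, u ⟨b, hb.2⟩} :
      Finset (Fin n)).card = 4 := by
    rw [Finset.card_insert_of_notMem, Finset.card_insert_of_notMem,
      Finset.card_insert_of_notMem, Finset.card_singleton]
    · simp only [Finset.mem_singleton, EmbeddingLike.apply_eq_iff_eq, Fin.mk.injEq]
      omega
    · simp only [Finset.mem_insert, Finset.mem_singleton, EmbeddingLike.apply_eq_iff_eq,
        Fin.mk.injEq]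
      push_neg
      omega
    · simp only [Finset.mem_insert, Finset.mem_singleton, EmbeddingLike.apply_eq_iff_eq,
        Fin.mk.injEq]
      push_neg
      omega
  have := Finset.card_le_card hsub
  omega

lemma adjT_commute (n a b : ℕ) (hsep : a + 2 ≤ b ∨ b + 2 ≤ a) :
    adjT n a * adjT n b = adjT n b * adjT n a := by
  refine (Equiv.Perm.Disjoint.commute ?_).eq
  intro p
  by_cases h1 : (p : ℕ) = a - 1 ∨ (p : ℕ) = a
  · by_cases ha : 1 ≤ a
    · right; exact adjT_apply_of_ne n b p (by omega) (by omega)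
    · left
      have : a = 0 := by omega
      subst this
      unfold adjT
      rw [dif_neg (by omega)]
      rfl
  · push_neg at h1
    left; exact adjT_apply_of_ne n a p h1.1 h1.2

lemma inducedWord_shortBraid (n : ℕ) (l r : List ℕ) (a b : ℕ)
    (hsep : a + 2 ≤ b ∨ b + 2 ≤ a) (A : Finset (Fin n)) (hA : A.card = 3) :
    inducedWord n (l ++ [a, b] ++ r) A = inducedWord n (l ++ [b, a] ++ r) A := by
  rw [inducedWord_eq_go, inducedWord_eq_go, goWord_append, goWord_append,
    goWord_append, goWord_append]
  have hperm : ((l ++ [a, b]).map (adjT n)).prod = ((l ++ [b, a]).map (adjT n)).prod := by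
    simp only [List.map_append, List.prod_append, List.map_cons, List.map_nil,
      List.prod_cons, List.prod_nil]
    rw [mul_one, mul_one, ← mul_assoc, ← mul_assoc, mul_assoc (l.map (adjT n)).prod,
      mul_assoc (l.map (adjT n)).prod, adjT_commute n a b hsep]
  rw [hperm]
  congr 1
  congr 1
  set v := 1 * (l.map (adjT n)).prod with hv
  show goWord n v [a, b] A = goWord n v [b, a] A
  have g1 : goWord n v [a, b] A = (stepOpt n v a A).toList ++ (stepOpt n v b A).toList := by
    simp [goWord, stepOpt_mul_adjT n a b hsep]
  have g2 : goWord n v [b, a] A = (stepOpt n v b A).toList ++ (stepOpt n v a A).toList := by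
    simp [goWord, stepOpt_mul_adjT n b a (hsep.symm)]
  rw [g1, g2]
  rcases not_both n a b hsep v A hA with h | h <;> simp [h]

lemma count212_shortBraid (n : ℕ) {ρ ρ' : List ℕ} (h : ShortBraidMove ρ ρ') :
    count212 n ρ = count212 n ρ' := by
  obtain ⟨l, r, a, b, hsep, rfl, rfl⟩ := h
  unfold count212
  congr 1
  apply Finset.filter_congr
  intro A _
  exact and_congr_right fun hA => by rw [inducedWord_shortBraid n l r a b hsep A hA]

end Count212Aux

/-- The number of `(2,1,2)`-subnetworks is the same for any two reduced
decompositions of `w` in the same commutation class. -/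
theorem count212_comm_invariant
    (n : ℕ) (w : Equiv.Perm (Fin n)) (ρ ρ' : List ℕ)
    (h : IsReducedDecomp n w ρ) (h' : IsReducedDecomp n w ρ')
    (hcomm : CommEquiv ρ ρ') :
    count212 n ρ = count212 n ρ' := by
  clear h h'
  have hc : Relation.ReflTransGen ShortBraidMove ρ ρ' := hcomm
  induction hc with
  | refl => rfl
  | tail hst hstep ih => exact (ih hst).trans (Count212Aux.count212_shortBraid n hstep)
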